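/- For coprime positive integers p and q, a point x = (x₁,x₂) ∈ [0,q)×[0,p) satisfies dist(x,(0,0)) = 0 if and only if there exists j ∈ {0,1,…,pq−1} such that x = (m_q(j/p), m_p(j/q)). -/

import Mathlib

/-- `mmod k u` is the unique element of `[0, k)` such that `u - mmod k u`
is an integer multiple of `k`. -/
noncomputable def mmod (k : ℕ) (u : ℝ) : ℝ := u - (k : ℝ) * (⌊u / (k : ℝ)⌋ : ℤ)

/-- `dmod k u = min (mmod k u) (k - mmod k u)`. -/
noncomputable def dmod (k : ℕ) (u : ℝ) : ℝ := min (mmod k u) ((k : ℝ) - mmod k u)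

/-- Distance on the Möbius ring `M^{q/p}`, whose points lie in `[0,q) × [0,p)`:
the minimum over `j ∈ {0, …, p*q - 1}` of
`dmod q (y₁ - x₁ + j/p) + dmod p (y₂ - x₂ + j/q)`. -/
noncomputable def distMqp (p q : ℕ) (x y : ℝ × ℝ) : ℝ :=
  sInf {v : ℝ | ∃ j ∈ Finset.range (p * q),
    v = dmod q (y.1 - x.1 + (j : ℝ) / (p : ℝ)) + dmod p (y.2 - x.2 + (j : ℝ) / (q : ℝ))}

/-- Addition on the Möbius ring `M^{q/p}`. -/
noncomputable def oplusMqp (p q : ℕ) (x y : ℝ × ℝ) : ℝ × ℝ :=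
  (mmod q (x.1 + y.1), mmod p (x.2 + y.2))

lemma mmod_nonneg {k : ℕ} (hk : 0 < k) (u : ℝ) : 0 ≤ mmod k u := by
  have hk' : (0:ℝ) < k := by exact_mod_cast hk
  have h1 : ((⌊u / (k:ℝ)⌋ : ℤ) : ℝ) ≤ u / k := Int.floor_le _
  have h2 : (k:ℝ) * (⌊u / (k:ℝ)⌋ : ℤ) ≤ k * (u / k) :=
    mul_le_mul_of_nonneg_left h1 hk'.le
  rw [mul_div_cancel₀ _ hk'.ne'] at h2
  unfold mmod; linarith

lemma mmod_lt {k : ℕ} (hk : 0 < k) (u : ℝ) : mmod k u < k := by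
  have hk' : (0:ℝ) < k := by exact_mod_cast hk
  have h1 : u / k < (⌊u / (k:ℝ)⌋ : ℤ) + 1 := Int.lt_floor_add_one _
  have h2 : (k:ℝ) * (u / k) < k * ((⌊u / (k:ℝ)⌋ : ℤ) + 1) :=
    mul_lt_mul_of_pos_left h1 hk'
  rw [mul_div_cancel₀ _ hk'.ne'] at h2
  unfold mmod; nlinarith

lemma mmod_add_int_mul {k : ℕ} (hk : 0 < k) (u : ℝ) (m : ℤ) :
    mmod k (u + k * m) = mmod k u := by
  have hk' : (0:ℝ) < k := by exact_mod_cast hk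
  have h : (u + (k:ℝ) * m) / k = u / k + m := by field_simp
  unfold mmod
  rw [h, Int.floor_add_intCast]
  push_cast
  ring

lemma mmod_eq_self {k : ℕ} (hk : 0 < k) {u : ℝ} (hu : u ∈ Set.Ico (0:ℝ) k) :
    mmod k u = u := by
  have hk' : (0:ℝ) < k := by exact_mod_cast hk
  have h : ⌊u / (k:ℝ)⌋ = 0 := by
    rw [Int.floor_eq_zero_iff]
    constructor
    · exact div_nonneg hu.1 hk'.le
    · rw [div_lt_one hk']; exact hu.2
  unfold mmod; rw [h]; simp

lemma dmod_nonneg {k : ℕ} (hk : 0 < k) (u : ℝ) : 0 ≤ dmod k u := by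
  have h1 := mmod_nonneg hk u
  have h2 := mmod_lt hk u
  unfold dmod
  exact le_min h1 (by linarith)

lemma dmod_eq_zero_iff {k : ℕ} (hk : 0 < k) (u : ℝ) :
    dmod k u = 0 ↔ mmod k u = 0 := by
  have h2 := mmod_lt hk u
  unfold dmod
  constructor
  · intro h
    rcases min_eq_iff.mp h with ⟨h', _⟩ | ⟨h', _⟩
    · exact h'
    · linarith
  · intro h; rw [h]; simp

lemma eq_mmod_of {k : ℕ} (hk : 0 < k) {u w : ℝ} (hu : u ∈ Set.Ico (0:ℝ) k)
    (h : mmod k (w - u) = 0) : mmod k w = u := by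
  have hm : w - u = (k:ℝ) * (⌊(w - u) / (k:ℝ)⌋ : ℤ) := by
    unfold mmod at h; linarith
  have hw : w = u + (k:ℝ) * (⌊(w - u) / (k:ℝ)⌋ : ℤ) := by linarith
  rw [hw, mmod_add_int_mul hk, mmod_eq_self hk hu]

lemma mmod_sub_mmod {k : ℕ} (hk : 0 < k) (w : ℝ) : mmod k (w - mmod k w) = 0 := by
  have : w - mmod k w = 0 + (k:ℝ) * (⌊w / (k:ℝ)⌋ : ℤ) := by unfold mmod; ring
  rw [this, mmod_add_int_mul hk]
  unfold mmod
  norm_num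

/-- A point `x ∈ [0,q) × [0,p)` is a zero point of `M^{q/p}` iff
`x = (mmod q (j/p), mmod p (j/q))` for some `j ∈ {0, …, p*q - 1}`. -/
theorem distMqp_zero_iff (p q : ℕ) (hp : 0 < p) (hq : 0 < q) (hpq : Nat.Coprime p q)
    (x : ℝ × ℝ) (hx : x ∈ Set.Ico (0:ℝ) (q : ℝ) ×ˢ Set.Ico (0:ℝ) (p : ℝ)) :
    distMqp p q x (0, 0) = 0 ↔
      ∃ j ∈ Finset.range (p * q),
        x = (mmod q ((j : ℝ) / (p : ℝ)), mmod p ((j : ℝ) / (q : ℝ))) := by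
  obtain ⟨hx1, hx2⟩ := hx
  set f : ℕ → ℝ := fun j =>
    dmod q (((0:ℝ×ℝ)).1 - x.1 + (j : ℝ) / (p : ℝ)) +
    dmod p (((0:ℝ×ℝ)).2 - x.2 + (j : ℝ) / (q : ℝ)) with hf
  set S : Set ℝ := {v : ℝ | ∃ j ∈ Finset.range (p * q), v = f j} with hS
  have hdist : distMqp p q x (0, 0) = sInf S := rfl
  have hSeq : S = f '' (Finset.range (p * q) : Set ℕ) := by
    ext v
    simp [hS, eq_comm]
  have hfin : S.Finite := by
    rw [hSeq]; exact (Finset.finite_toSet _).image f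
  have hne : S.Nonempty := by
    refine ⟨f 0, 0, ?_, rfl⟩
    simp [Nat.mul_pos hp hq]
  have hpos : ∀ v ∈ S, (0:ℝ) ≤ v := by
    rintro v ⟨j, _, rfl⟩
    exact add_nonneg (dmod_nonneg hq _) (dmod_nonneg hp _)
  constructor
  · intro h
    rw [hdist] at h
    have hmem := hne.csInf_mem hfin
    rw [h] at hmem
    obtain ⟨j, hj, hv⟩ := hmem
    refine ⟨j, hj, ?_⟩
    have h1 : dmod q ((0:ℝ×ℝ).1 - x.1 + (j : ℝ) / (p : ℝ)) = 0 := by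
      have a := dmod_nonneg hq ((0:ℝ×ℝ).1 - x.1 + (j : ℝ) / (p : ℝ))
      have b := dmod_nonneg hp ((0:ℝ×ℝ).2 - x.2 + (j : ℝ) / (q : ℝ))
      rw [hf] at hv
      simp only at hv
      linarith
    have h2 : dmod p ((0:ℝ×ℝ).2 - x.2 + (j : ℝ) / (q : ℝ)) = 0 := by
      have a := dmod_nonneg hq ((0:ℝ×ℝ).1 - x.1 + (j : ℝ) / (p : ℝ))
      have b := dmod_nonneg hp ((0:ℝ×ℝ).2 - x.2 + (j : ℝ) / (q : ℝ))
      rw [hf] at hv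
      simp only at hv
      linarith
    rw [dmod_eq_zero_iff hq] at h1
    rw [dmod_eq_zero_iff hp] at h2
    have e1 : (0:ℝ×ℝ).1 - x.1 + (j : ℝ) / (p : ℝ) = (j : ℝ) / (p : ℝ) - x.1 := by
      simp; ring
    have e2 : (0:ℝ×ℝ).2 - x.2 + (j : ℝ) / (q : ℝ) = (j : ℝ) / (q : ℝ) - x.2 := by
      simp; ring
    rw [e1] at h1
    rw [e2] at h2
    have hx1' := eq_mmod_of hq hx1 h1
    have hx2' := eq_mmod_of hp hx2 h2
    ext <;> simp [hx1'.symm, hx2'.symm]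
  · rintro ⟨j, hj, hxeq⟩
    have hx1' : x.1 = mmod q ((j : ℝ) / (p : ℝ)) := by rw [hxeq]
    have hx2' : x.2 = mmod p ((j : ℝ) / (q : ℝ)) := by rw [hxeq]
    have h0 : (0:ℝ) ∈ S := by
      refine ⟨j, hj, ?_⟩
      have e1 : (0:ℝ×ℝ).1 - x.1 + (j : ℝ) / (p : ℝ)
          = (j : ℝ) / (p : ℝ) - mmod q ((j : ℝ) / (p : ℝ)) := by
        rw [hx1']; simp; ring
      have e2 : (0:ℝ×ℝ).2 - x.2 + (j : ℝ) / (q : ℝ)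
          = (j : ℝ) / (q : ℝ) - mmod p ((j : ℝ) / (q : ℝ)) := by
        rw [hx2']; simp; ring
      rw [hf]
      simp only
      rw [e1, e2,
        (dmod_eq_zero_iff hq _).mpr (mmod_sub_mmod hq _),
        (dmod_eq_zero_iff hp _).mpr (mmod_sub_mmod hp _)]
      norm_num
    rw [hdist]
    exact le_antisymm (csInf_le ⟨0, hpos⟩ h0) (le_csInf hne hpos)
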